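/- Let C ⊆ 𝔽_2^n be a full-length binary linear code of dimension k with all nonzero weights in {16, 20} and satisfying k ≥ n − 26. Then n ≤ 31 and k ≤ 5. Moreover, if n = 31 (and hence k = 5), every nonzero codeword has weight 16. -/

import Mathlib

open Finset

private lemma zmod2_ne_zero : ∀ a : ZMod 2, a ≠ 0 → a = 1 := by decide

private lemma zmod2_add_self : ∀ a : ZMod 2, ¬ (a + a = 1) := by decide

private lemma zmod2_pt : ∀ a b : ZMod 2,
    2 * (if a = 1 ∧ b = 1 then (1:ℕ) else 0) + (if a + b = 1 then 1 else 0)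
      = (if a = 1 then 1 else 0) + (if b = 1 then 1 else 0) := by decide

private lemma zmod2_mul_ite : ∀ a b : ZMod 2,
    (if a = 1 then (1:ℕ) else 0) * (if b = 1 then 1 else 0)
      = if a = 1 ∧ b = 1 then 1 else 0 := by decide

private lemma quad_lb : ∀ m : ℤ, 20 ≤ m ^ 2 - 71 * m + 1280 := by
  intro m
  have hne : 2 * m - 71 ≠ 0 := by omega
  have h1 : 1 ≤ |2 * m - 71| := Int.one_le_abs hne
  have h2 : 1 ≤ (2 * m - 71) ^ 2 := by nlinarith [sq_abs (2 * m - 71)]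
  nlinarith

private lemma zmod2_half {V : Type*} [AddCommGroup V] [Module (ZMod 2) V] [Fintype V]
    [DecidableEq V] (g : V → ZMod 2) (hadd : ∀ a b, g (a + b) = g a + g b)
    (v₀ : V) (h1 : g v₀ = 1) :
    2 * (Finset.univ.filter fun v => g v = 1).card = Fintype.card V := by
  classical
  have hvv : ∀ v : V, v + v = 0 := by
    intro v
    have h : ((1 : ZMod 2) + 1) • v = v + v := by rw [add_smul, one_smul]
    rw [show ((1 : ZMod 2) + 1) = 0 by decide, zero_smul] at h
    exact h.symm
  have key : (Finset.univ.filter fun v => g v = 1).card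
      = (Finset.univ.filter fun v => ¬ g v = 1).card := by
    apply Finset.card_nbij' (fun v => v + v₀) (fun v => v + v₀)
    · intro a ha
      simp only [mem_coe, mem_filter, mem_univ, true_and] at ha ⊢
      rw [hadd, ha, h1]
      decide
    · intro a ha
      simp only [mem_coe, mem_filter, mem_univ, true_and] at ha ⊢
      have h0 : g a = 0 := by
        have : ∀ b : ZMod 2, ¬ b = 1 → b = 0 := by decide
        exact this _ ha
      rw [hadd, h0, h1, zero_add]
    · intro a _
      simp only [add_assoc, hvv, add_zero]
    · intro a _
      simp only [add_assoc, hvv, add_zero]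
  have hpart := Finset.card_filter_add_card_filter_not
    (s := (Finset.univ : Finset V)) (p := fun v => g v = 1)
  rw [Finset.card_univ] at hpart
  omega

private lemma zmod2_halfle {V : Type*} [AddCommGroup V] [Module (ZMod 2) V] [Fintype V]
    [DecidableEq V] (g : V → ZMod 2) (hadd : ∀ a b, g (a + b) = g a + g b) :
    2 * (Finset.univ.filter fun v => g v = 1).card ≤ Fintype.card V := by
  by_cases h : ∃ v, g v = 1
  · exact (zmod2_half g hadd h.choose h.choose_spec).le
  · push_neg at h
    have he : (Finset.univ.filter fun v => g v = 1) = ∅ :=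
      Finset.filter_eq_empty_iff.2 fun v _ => h v
    simp [he]

/-- A full-length binary linear code of dimension `k` with all nonzero weights in
`{16, 20}` and satisfying the B-inequality `k ≥ n − 26` has `n ≤ 31` and `k ≤ 5`;
moreover if `n = 31` then every nonzero codeword has weight `16`. -/
theorem stmt8 (n k : ℕ) (C : Submodule (ZMod 2) (Fin n → ZMod 2))
    (hk : Module.finrank (ZMod 2) C = k)
    (hfull : ∀ i : Fin n, ∃ c ∈ C, c i ≠ 0)
    (hw : ∀ c ∈ C, c ≠ 0 → hammingNorm c = 16 ∨ hammingNorm c = 20)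
    (hB : n ≤ k + 26) :
    n ≤ 31 ∧ k ≤ 5 ∧ (n = 31 → ∀ c ∈ C, c ≠ 0 → hammingNorm c = 16) := by
  classical
  obtain ⟨inst⟩ : Nonempty (Fintype ↥C) := ⟨Fintype.ofFinite _⟩
  letI := inst
  have hcard : Fintype.card ↥C = 2 ^ k := by
    rw [Module.card_eq_pow_finrank (K := ZMod 2) (V := ↥C), ZMod.card, hk]
  set w : ↥C → ℕ := fun v => hammingNorm (v : Fin n → ZMod 2) with hwdef
  -- weight as a sum of indicators
  have hnorm : ∀ x : Fin n → ZMod 2, hammingNorm x = ∑ i, if x i = 1 then 1 else 0 := by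
    intro x
    have h0 : hammingNorm x = (Finset.univ.filter fun i => x i ≠ 0).card := rfl
    rw [h0, Finset.card_filter]
    refine Finset.sum_congr rfl fun i _ => ?_
    have h : (x i ≠ 0) ↔ (x i = 1) :=
      ⟨fun h => zmod2_ne_zero _ h, fun h => by rw [h]; decide⟩
    exact if_congr h rfl rfl
  -- column counts
  set N1 : Fin n → ℕ := fun i =>
    (Finset.univ.filter fun v : ↥C => (v : Fin n → ZMod 2) i = 1).card with hN1def
  set N2 : Fin n → Fin n → ℕ := fun i j =>
    (Finset.univ.filter fun v : ↥C =>
      (v : Fin n → ZMod 2) i = 1 ∧ (v : Fin n → ZMod 2) j = 1).card with hN2def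
  set NH : Fin n → Fin n → ℕ := fun i j =>
    (Finset.univ.filter fun v : ↥C =>
      (v : Fin n → ZMod 2) i + (v : Fin n → ZMod 2) j = 1).card with hNHdef
  have haddi : ∀ i : Fin n, ∀ a b : ↥C,
      ((a + b : ↥C) : Fin n → ZMod 2) i = (a : Fin n → ZMod 2) i + (b : Fin n → ZMod 2) i :=
    fun i a b => rfl
  have hN1card : ∀ i : Fin n, 2 * N1 i = 2 ^ k := by
    intro i
    obtain ⟨c, hc, hne⟩ := hfull i
    have h1 : ((⟨c, hc⟩ : ↥C) : Fin n → ZMod 2) i = 1 := zmod2_ne_zero _ hne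
    have := zmod2_half (fun v : ↥C => (v : Fin n → ZMod 2) i) (haddi i) ⟨c, hc⟩ h1
    rwa [hcard] at this
  -- first moment
  set S1 : ℕ := ∑ v : ↥C, w v with hS1def
  have hS1 : S1 = ∑ i : Fin n, N1 i := by
    rw [hS1def]
    simp only [hwdef, hnorm]
    rw [Finset.sum_comm]
    exact Finset.sum_congr rfl fun i _ => (Finset.card_filter _ _).symm
  have hM1 : 2 * S1 = n * 2 ^ k := by
    rw [hS1, Finset.mul_sum]
    rw [Finset.sum_congr rfl fun i _ => hN1card i, Finset.sum_const, Finset.card_univ,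
      Fintype.card_fin, smul_eq_mul]
  -- second moment
  set S2 : ℕ := ∑ v : ↥C, w v ^ 2 with hS2def
  have hS2 : S2 = ∑ i : Fin n, ∑ j : Fin n, N2 i j := by
    rw [hS2def]
    have hterm : ∀ v : ↥C, w v ^ 2
        = ∑ i : Fin n, ∑ j : Fin n,
            if (v : Fin n → ZMod 2) i = 1 ∧ (v : Fin n → ZMod 2) j = 1 then 1 else 0 := by
      intro v
      rw [pow_two, hwdef]
      simp only [hnorm]
      rw [Finset.sum_mul_sum]
      exact Finset.sum_congr rfl fun i _ => Finset.sum_congr rfl fun j _ =>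
        zmod2_mul_ite _ _
    rw [Finset.sum_congr rfl fun v _ => hterm v]
    rw [Finset.sum_comm]
    refine Finset.sum_congr rfl fun i _ => ?_
    rw [Finset.sum_comm]
    exact Finset.sum_congr rfl fun j _ => (Finset.card_filter _ _).symm
  have hpair : ∀ i j : Fin n, 4 * N2 i j + 2 * NH i j = 2 * 2 ^ k := by
    intro i j
    have hsum : 2 * N2 i j + NH i j = N1 i + N1 j := by
      simp only [hN2def, hNHdef, hN1def, Finset.card_filter, Finset.mul_sum,
        ← Finset.sum_add_distrib]
      exact Finset.sum_congr rfl fun v _ => zmod2_pt _ _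
    have := hN1card i
    have := hN1card j
    omega
  have hdiag : ∀ i : Fin n, NH i i = 0 := by
    intro i
    rw [hNHdef]
    simp only [Finset.card_eq_zero]
    exact Finset.filter_eq_empty_iff.2 fun v _ => zmod2_add_self _
  have hNHle : ∀ i j : Fin n, 2 * NH i j ≤ 2 ^ k := by
    intro i j
    have := zmod2_halfle
      (fun v : ↥C => (v : Fin n → ZMod 2) i + (v : Fin n → ZMod 2) j)
      (fun a b => by simp only [haddi i, haddi j]; ring)
    rwa [hcard] at this
  set D : ℕ := ∑ i : Fin n, ∑ j : Fin n, 2 * NH i j with hDdef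
  have hM2 : 4 * S2 + D = 2 * n ^ 2 * 2 ^ k := by
    rw [hS2, hDdef, Finset.mul_sum, ← Finset.sum_add_distrib]
    have : ∀ i : Fin n, (4 * ∑ j : Fin n, N2 i j) + ∑ j : Fin n, 2 * NH i j
        = n * (2 * 2 ^ k) := by
      intro i
      rw [Finset.mul_sum, ← Finset.sum_add_distrib,
        Finset.sum_congr rfl fun j _ => hpair i j, Finset.sum_const, Finset.card_univ,
        Fintype.card_fin, smul_eq_mul]
    rw [Finset.sum_congr rfl fun i _ => this i, Finset.sum_const, Finset.card_univ,
      Fintype.card_fin, smul_eq_mul]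
    ring
  have hD : D ≤ n * (n - 1) * 2 ^ k := by
    rw [hDdef]
    have hrow : ∀ i : Fin n, (∑ j : Fin n, 2 * NH i j) ≤ (n - 1) * 2 ^ k := by
      intro i
      rw [← Finset.add_sum_erase _ _ (Finset.mem_univ i), hdiag i, Nat.mul_zero, Nat.zero_add]
      calc ∑ j ∈ Finset.univ.erase i, 2 * NH i j
          ≤ (Finset.univ.erase i).card • 2 ^ k :=
            Finset.sum_le_card_nsmul _ _ _ fun j _ => hNHle i j
        _ = (n - 1) * 2 ^ k := by
            rw [Finset.card_erase_of_mem (Finset.mem_univ i), Finset.card_univ,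
              Fintype.card_fin, smul_eq_mul]
    calc ∑ i : Fin n, ∑ j : Fin n, 2 * NH i j ≤ ∑ _i : Fin n, (n - 1) * 2 ^ k :=
          Finset.sum_le_sum fun i _ => hrow i
      _ = n * ((n - 1) * 2 ^ k) := by
          rw [Finset.sum_const, Finset.card_univ, Fintype.card_fin, smul_eq_mul]
      _ = n * (n - 1) * 2 ^ k := by ring
  -- polynomial identity from the weight distribution
  have hpoly : ∑ v : ↥C, ((w v : ℤ) - 16) * ((w v : ℤ) - 20) = 320 := by
    rw [Finset.sum_eq_single (0 : ↥C)]
    · have h0 : w (0 : ↥C) = 0 := by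
        rw [hwdef]
        simp [hammingNorm_eq_zero]
      rw [h0]; norm_num
    · intro v _ hv0
      have hv0' : (v : Fin n → ZMod 2) ≠ 0 := by
        intro h
        exact hv0 (Subtype.ext h)
      rcases hw (v : Fin n → ZMod 2) v.2 hv0' with h | h <;>
        · rw [hwdef] at *
          simp only [h]
          norm_num
    · intro h
      exact absurd (Finset.mem_univ _) h
  have hC3 : (S2 : ℤ) + 320 * 2 ^ k = 36 * (S1 : ℤ) + 320 := by
    have hexp : ∀ v : ↥C, ((w v : ℤ) - 16) * ((w v : ℤ) - 20)
        = (w v : ℤ) ^ 2 - 36 * (w v : ℤ) + 320 := fun v => by ring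
    rw [Finset.sum_congr rfl fun v _ => hexp v] at hpoly
    rw [Finset.sum_add_distrib, Finset.sum_sub_distrib, Finset.sum_const,
      Finset.card_univ, hcard] at hpoly
    have h1 : (S1 : ℤ) = ∑ v : ↥C, (w v : ℤ) := by rw [hS1def]; push_cast; ring
    have h2 : (S2 : ℤ) = ∑ v : ↥C, (w v : ℤ) ^ 2 := by rw [hS2def]; push_cast; ring
    rw [← Finset.mul_sum, ← h1] at hpoly
    rw [← h2, nsmul_eq_mul] at hpoly
    push_cast at hpoly ⊢
    linarith
  -- bounds on S1 from weights
  have hS1erase : S1 = ∑ v ∈ Finset.univ.erase (0 : ↥C), w v := by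
    rw [hS1def, ← Finset.add_sum_erase _ _ (Finset.mem_univ (0 : ↥C))]
    have h0 : w (0 : ↥C) = 0 := by rw [hwdef]; simp [hammingNorm_eq_zero]
    rw [h0, Nat.zero_add]
  have hcarde : (Finset.univ.erase (0 : ↥C)).card = 2 ^ k - 1 := by
    rw [Finset.card_erase_of_mem (Finset.mem_univ _), Finset.card_univ, hcard]
  have hwv : ∀ v : ↥C, v ≠ 0 → w v = 16 ∨ w v = 20 := by
    intro v hv
    have hv0' : (v : Fin n → ZMod 2) ≠ 0 := fun h => hv (Subtype.ext h)
    exact hw _ v.2 hv0'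
  have hub : S1 ≤ (2 ^ k - 1) * 20 := by
    rw [hS1erase, ← hcarde, ← smul_eq_mul]
    refine Finset.sum_le_card_nsmul _ _ _ fun v hv => ?_
    rcases hwv v (Finset.ne_of_mem_erase hv) with h | h <;> omega
  have hlb : (2 ^ k - 1) * 16 ≤ S1 := by
    rw [hS1erase, ← hcarde, ← smul_eq_mul]
    refine Finset.card_nsmul_le_sum _ _ _ fun v hv => ?_
    rcases hwv v (Finset.ne_of_mem_erase hv) with h | h <;> omega
  -- pass to ℤ
  have hkpos : (1 : ℕ) ≤ 2 ^ k := Nat.one_le_two_pow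
  have zM1 : 2 * (S1 : ℤ) = n * 2 ^ k := by exact_mod_cast hM1
  have zub : (S1 : ℤ) ≤ ((2:ℤ) ^ k - 1) * 20 := by
    have := hub
    zify [hkpos] at this
    linarith
  have zlb : ((2:ℤ) ^ k - 1) * 16 ≤ (S1 : ℤ) := by
    have := hlb
    zify [hkpos] at this
    linarith
  have zM2 : 4 * (S2 : ℤ) ≥ ((n : ℤ) ^ 2 + n) * 2 ^ k := by
    have hDz : (D : ℤ) ≤ ((n : ℤ) ^ 2 - n) * 2 ^ k := by
      rcases Nat.eq_zero_or_pos n with hn0 | hn1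
      · have : D ≤ 0 := by rw [hn0] at hD; simpa using hD
        have hD0 : D = 0 := Nat.le_zero.mp this
        rw [hD0, hn0]
        norm_num
      · have := hD
        have hcast : ((n * (n - 1) * 2 ^ k : ℕ) : ℤ) = ((n:ℤ) ^ 2 - n) * 2 ^ k := by
          push_cast [Nat.cast_sub hn1]
          ring
        calc (D : ℤ) ≤ ((n * (n - 1) * 2 ^ k : ℕ) : ℤ) := by exact_mod_cast this
          _ = ((n:ℤ) ^ 2 - n) * 2 ^ k := hcast
    have hM2z : 4 * (S2 : ℤ) + D = 2 * (n : ℤ) ^ 2 * 2 ^ k := by exact_mod_cast hM2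
    linarith
  -- the key quadratic inequality
  have h72 : 144 * (S1 : ℤ) = 72 * ((n : ℤ) * 2 ^ k) := by linarith
  have key : (2 : ℤ) ^ k * ((n : ℤ) ^ 2 - 71 * n + 1280) ≤ 1280 := by linarith
  clear hS2 hM2 hD zM2 hC3 hpoly hS1 hN1card hpair hdiag hNHle h72 zub
  clear hS2def hDdef
  clear_value S2 D
  clear S2 D
  clear hN1def hN2def hNHdef haddi
  clear_value N1 N2 NH
  clear N1 N2 NH
  have quad := quad_lb
  have hPk : ∀ m : ℕ, (2:ℤ) ^ k ≤ 2 ^ m → k ≤ m := by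
    intro m hm
    have : (2:ℕ) ^ k ≤ 2 ^ m := by exact_mod_cast hm
    exact (Nat.pow_le_pow_iff_right (by norm_num)).mp this
  -- n ≤ 31
  have hn31 : n ≤ 31 := by
    by_contra hcon
    push_neg at hcon
    have hk6 : 6 ≤ k := by omega
    have hP64 : (2:ℤ) ^ 6 ≤ 2 ^ k := pow_le_pow_right₀ (by norm_num) hk6
    have hq := quad (n : ℤ)
    have hp : (0:ℤ) ≤ 2 ^ k := by positivity
    have hmul : (2:ℤ) ^ k * 20 ≤ 2 ^ k * ((n:ℤ) ^ 2 - 71 * n + 1280) :=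
      mul_le_mul_of_nonneg_left hq hp
    have hPle : (2:ℤ) ^ k ≤ 64 := by linarith
    have hk6' : k ≤ 6 := hPk 6 (by norm_num at hPle ⊢; exact hPle)
    have hkeq : k = 6 := le_antisymm hk6' hk6
    have hn32 : n = 32 := by omega
    rw [hkeq, hn32] at key
    norm_num at key
  refine ⟨hn31, ?_, ?_⟩
  · -- k ≤ 5
    have hle : (n : ℤ) ≤ 31 := by exact_mod_cast hn31
    have hp : (0:ℤ) ≤ 2 ^ k := by positivity
    have hnP : (n : ℤ) * 2 ^ k ≤ 31 * 2 ^ k := mul_le_mul_of_nonneg_right hle hp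
    have hP32 : (2:ℤ) ^ k ≤ 32 := by linarith
    exact hPk 5 (by norm_num at hP32 ⊢; exact hP32)
  · -- n = 31 case
    intro hn c hc hc0
    have hk5 : k = 5 := by
      have h1 : k ≤ 5 := by
        have hle : (n : ℤ) ≤ 31 := by exact_mod_cast hn31
        have hp : (0:ℤ) ≤ 2 ^ k := by positivity
        have hnP : (n : ℤ) * 2 ^ k ≤ 31 * 2 ^ k := mul_le_mul_of_nonneg_right hle hp
        have hP32 : (2:ℤ) ^ k ≤ 32 := by linarith
        exact hPk 5 (by norm_num at hP32 ⊢; exact hP32)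
      omega
    have hS1val : S1 = 496 := by
      rw [hn, hk5] at hM1
      omega
    by_contra hne
    have h20 : hammingNorm c = 20 := by rcases hw c hc hc0 with h | h; exact absurd h hne; exact h
    set v : ↥C := ⟨c, hc⟩ with hvdef
    have hv0 : v ≠ 0 := fun h => hc0 (by simpa [hvdef] using congrArg Subtype.val h)
    have hvmem : v ∈ Finset.univ.erase (0 : ↥C) :=
      Finset.mem_erase.2 ⟨hv0, Finset.mem_univ _⟩
    have hsplit : ∑ x ∈ Finset.univ.erase (0 : ↥C), w x
        = w v + ∑ x ∈ (Finset.univ.erase (0 : ↥C)).erase v, w x :=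
      (Finset.add_sum_erase _ _ hvmem).symm
    have hrest : (2 ^ k - 1 - 1) * 16 ≤ ∑ x ∈ (Finset.univ.erase (0 : ↥C)).erase v, w x := by
      have hcard2 : ((Finset.univ.erase (0 : ↥C)).erase v).card = 2 ^ k - 1 - 1 := by
        rw [Finset.card_erase_of_mem hvmem, hcarde]
      rw [← hcard2, ← smul_eq_mul]
      refine Finset.card_nsmul_le_sum _ _ _ fun x hx => ?_
      have hx0 : x ≠ 0 := Finset.ne_of_mem_erase (Finset.mem_of_mem_erase hx)
      rcases hwv x hx0 with h | h <;> omega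
    have hwv20 : w v = 20 := by rw [hwdef]; simpa [hvdef] using h20
    rw [hk5] at hrest
    rw [← hS1erase, hS1val, hwv20] at hsplit
    omega
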